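/- (Deterministic core of Proposition 1) Let p be a statistics on a finite type set Ω with d_w ≥ 1 and r_w ≤ k_w for all w, and let c ∈ [0,1) be such that φ_p(z) > z for every z ∈ [0,c]. Define the recursion z(0) = 0, z(t+1) = φ_p(z(t)). Then there exists a finite time τ such that z(t) > c for all t ≥ τ; moreover, if c = inf{ z ∈ [0,1] : ψ_p(z) ≥ 1−ε } for some ε ∈ (0,1], then ψ_p(z(t)) ≥ 1−ε for all t ≥ τ. -/

import Mathlib

/-- `φ_{k,r}(z) = ∑_{u=r}^{k} (k choose u) z^u (1-z)^{k-u}`. -/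
def phiKR (k r : ℕ) (z : ℝ) : ℝ :=
  ∑ u ∈ Finset.Icc r k, (k.choose u : ℝ) * z ^ u * (1 - z) ^ (k - u)

/-- `ψ_p(z) = ∑_w p_w φ_{k_w, r_w}(z)`. -/
def psiP {Ω : Type*} [Fintype Ω] (k r : Ω → ℕ) (p : Ω → ℝ) (z : ℝ) : ℝ :=
  ∑ w, p w * phiKR (k w) (r w) z

/-- `φ_p(z) = ⟨p,d⟩⁻¹ ∑_w p_w d_w φ_{k_w, r_w}(z)`. -/
noncomputable def phiP {Ω : Type*} [Fintype Ω] (d k r : Ω → ℕ) (p : Ω → ℝ) (z : ℝ) : ℝ :=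
  (∑ w, p w * (d w : ℝ))⁻¹ * ∑ w, p w * (d w : ℝ) * phiKR (k w) (r w) z

open Finset

private lemma telescope_Icc (b : ℕ → ℝ) : ∀ (k rr : ℕ), rr ≤ k →
    ∑ u ∈ Finset.Icc rr k, (b u - b (u + 1)) = b rr - b (k + 1) := by
  intro k
  induction k with
  | zero => intro rr h; interval_cases rr; simp
  | succ k ih =>
    intro rr h
    rcases Nat.lt_or_ge rr (k+1) with h' | h'
    · rw [Finset.sum_Icc_succ_top (by omega), ih rr (by omega)]
      ring
    · have : rr = k + 1 := le_antisymm h h'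
      subst this
      simp

private lemma phiKR_hasDerivAt (k rr : ℕ) (h : rr ≤ k) (z : ℝ) :
    HasDerivAt (phiKR k rr)
      ((k.choose rr : ℝ) * rr * z ^ (rr - 1) * (1 - z) ^ (k - rr)) z := by
  set b : ℕ → ℝ := fun u => (k.choose u : ℝ) * u * z ^ (u - 1) * (1 - z) ^ (k - u) with hb
  have key : HasDerivAt (phiKR k rr) (∑ u ∈ Finset.Icc rr k, (b u - b (u + 1))) z := by
    apply HasDerivAt.fun_sum
    intro u hu
    have hu' : u ≤ k := (Finset.mem_Icc.mp hu).2
    have h1 : HasDerivAt (fun z : ℝ => z ^ u) ((u : ℝ) * z ^ (u - 1)) z := hasDerivAt_pow u z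
    have h2 : HasDerivAt (fun z : ℝ => (1 - z) ^ (k - u))
        (((k - u : ℕ) : ℝ) * (1 - z) ^ (k - u - 1) * (-1)) z := by
      have hin : HasDerivAt (fun z : ℝ => 1 - z) (-1) z := (hasDerivAt_id z).const_sub 1
      exact hin.pow (k - u)
    have h3 := ((h1.const_mul ((k.choose u : ℝ))).mul h2)
    convert h3 using 1
    case e'_4 => rfl
    case e'_8 => rfl
    have hc : ((k.choose (u+1) : ℕ) : ℝ) * ((u : ℝ) + 1) = (k.choose u : ℝ) * ((k - u : ℕ) : ℝ) := by
      exact_mod_cast Nat.choose_succ_right_eq k u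
    have e1 : b u = (k.choose u : ℝ) * u * z ^ (u - 1) * (1 - z) ^ (k - u) := rfl
    have e2 : b (u + 1) = (k.choose (u+1) : ℝ) * ((u:ℝ)+1) * z ^ u * (1 - z) ^ (k - u - 1) := by
      show (k.choose (u+1) : ℝ) * ((u+1 : ℕ) : ℝ) * z ^ (u + 1 - 1) * (1 - z) ^ (k - (u+1)) = _
      rw [show u + 1 - 1 = u from rfl, show k - (u+1) = k - u - 1 from rfl]
      push_cast
      ring
    rw [e1, e2, hc]
    ring
  have : ∑ u ∈ Finset.Icc rr k, (b u - b (u + 1)) =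
      (k.choose rr : ℝ) * rr * z ^ (rr - 1) * (1 - z) ^ (k - rr) := by
    rw [telescope_Icc b k rr h]
    have : b (k + 1) = 0 := by simp [hb, Nat.choose_succ_self]
    rw [this, sub_zero]
  rwa [this] at key

private lemma phiKR_continuous (k rr : ℕ) : Continuous (phiKR k rr) := by
  unfold phiKR
  exact continuous_finset_sum _ fun u _ =>
    ((continuous_const.mul (continuous_pow u)).mul
      ((continuous_const.sub continuous_id).pow (k - u)))

private lemma phiKR_monotoneOn (k rr : ℕ) (h : rr ≤ k) :
    MonotoneOn (phiKR k rr) (Set.Icc (0:ℝ) 1) := by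
  apply monotoneOn_of_deriv_nonneg (convex_Icc 0 1)
    ((phiKR_continuous k rr).continuousOn)
  · intro z hz
    exact (phiKR_hasDerivAt k rr h z).differentiableAt.differentiableWithinAt
  · intro z hz
    rw [interior_Icc] at hz
    rw [(phiKR_hasDerivAt k rr h z).deriv]
    have h1 : (0:ℝ) ≤ z := le_of_lt hz.1
    have h2 : (0:ℝ) ≤ 1 - z := by linarith [hz.2]
    positivity

private lemma phiKR_nonneg (k rr : ℕ) {z : ℝ} (h0 : 0 ≤ z) (h1 : z ≤ 1) :
    0 ≤ phiKR k rr z := by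
  unfold phiKR
  apply Finset.sum_nonneg
  intro u _
  have : (0:ℝ) ≤ 1 - z := by linarith
  positivity

private lemma phiKR_le_one (k rr : ℕ) {z : ℝ} (h0 : 0 ≤ z) (h1 : z ≤ 1) :
    phiKR k rr z ≤ 1 := by
  have hz1 : (0:ℝ) ≤ 1 - z := by linarith
  have hsub : Finset.Icc rr k ⊆ Finset.range (k + 1) := by
    intro u hu
    simp only [Finset.mem_range, Finset.mem_Icc] at *
    omega
  calc phiKR k rr z ≤ ∑ u ∈ Finset.range (k+1), (k.choose u : ℝ) * z ^ u * (1 - z) ^ (k - u) := by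
        apply Finset.sum_le_sum_of_subset_of_nonneg hsub
        intro u _ _
        positivity
    _ = (z + (1 - z)) ^ k := by
        rw [add_pow]
        apply Finset.sum_congr rfl
        intro u _
        ring
    _ = 1 := by norm_num

private lemma phiKR_one (k rr : ℕ) (h : rr ≤ k) : phiKR k rr 1 = 1 := by
  unfold phiKR
  rw [Finset.sum_eq_single k]
  · simp
  · intro u hu hne
    have : k - u ≠ 0 := by simp only [Finset.mem_Icc] at hu; omega
    simp [this, zero_pow]
  · intro hk
    exact absurd (Finset.mem_Icc.mpr ⟨h, le_refl k⟩) hk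

example : True := trivial

private lemma psiP_monotoneOn {Ω : Type*} [Fintype Ω] (k r : Ω → ℕ) (hrk : ∀ w, r w ≤ k w)
    (p : Ω → ℝ) (hp0 : ∀ w, 0 ≤ p w) :
    MonotoneOn (psiP k r p) (Set.Icc (0:ℝ) 1) := by
  intro x hx y hy hxy
  unfold psiP
  apply Finset.sum_le_sum
  intro w _
  exact mul_le_mul_of_nonneg_left
    (phiKR_monotoneOn (k w) (r w) (hrk w) hx hy hxy) (hp0 w)

theorem recursion_exceeds_threshold_in_finite_time'
    {Ω : Type*} [Fintype Ω] [Nonempty Ω] (d k r : Ω → ℕ)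
    (hd : ∀ w, 1 ≤ d w) (hrk : ∀ w, r w ≤ k w)
    (p : Ω → ℝ) (hp0 : ∀ w, 0 ≤ p w) (hp1 : ∀ w, p w ≤ 1) (hpsum : ∑ w, p w = 1)
    (c : ℝ) (hc0 : 0 ≤ c) (hc1 : c < 1)
    (hφ : ∀ z ∈ Set.Icc (0 : ℝ) c, z < phiP d k r p z) :
    ∃ τ : ℕ,
      (∀ t : ℕ, τ ≤ t → c < (phiP d k r p)^[t] 0) ∧
      (∀ ε : ℝ, 0 < ε → ε ≤ 1 →
        c = sInf {z : ℝ | z ∈ Set.Icc (0 : ℝ) 1 ∧ 1 - ε ≤ psiP k r p z} →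
        ∀ t : ℕ, τ ≤ t → 1 - ε ≤ psiP k r p ((phiP d k r p)^[t] 0)) := by
  set f := phiP d k r p with hf
  set D := ∑ w, p w * (d w : ℝ) with hD
  have hD1 : (1:ℝ) ≤ D := by
    rw [hD, ← hpsum]
    apply Finset.sum_le_sum
    intro w _
    have h1 : (1:ℝ) ≤ (d w : ℝ) := by exact_mod_cast hd w
    nlinarith [hp0 w]
  have hDpos : (0:ℝ) < D := lt_of_lt_of_le one_pos hD1
  -- f maps [0,1] to [0,1]
  have hmaps : ∀ z ∈ Set.Icc (0:ℝ) 1, f z ∈ Set.Icc (0:ℝ) 1 := by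
    intro z hz
    have hnn : ∀ w : Ω, 0 ≤ p w * (d w : ℝ) := fun w =>
      mul_nonneg (hp0 w) (Nat.cast_nonneg _)
    constructor
    · apply mul_nonneg (inv_nonneg.mpr hDpos.le)
      apply Finset.sum_nonneg
      intro w _
      exact mul_nonneg (hnn w) (phiKR_nonneg _ _ hz.1 hz.2)
    · rw [hf, phiP, ← hD]
      rw [inv_mul_le_iff₀ hDpos, mul_one]
      apply Finset.sum_le_sum
      intro w _
      nlinarith [hnn w, phiKR_le_one (k w) (r w) hz.1 hz.2,
        phiKR_nonneg (k w) (r w) hz.1 hz.2]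
  -- f monotone on [0,1]
  have hmono : MonotoneOn f (Set.Icc (0:ℝ) 1) := by
    intro x hx y hy hxy
    rw [hf, phiP, phiP, ← hD]
    apply mul_le_mul_of_nonneg_left _ (inv_nonneg.mpr hDpos.le)
    apply Finset.sum_le_sum
    intro w _
    exact mul_le_mul_of_nonneg_left
      (phiKR_monotoneOn (k w) (r w) (hrk w) hx hy hxy)
      (mul_nonneg (hp0 w) (Nat.cast_nonneg _))
  -- f continuous
  have hcont : Continuous f := by
    rw [hf]
    unfold phiP
    exact continuous_const.mul (continuous_finset_sum _ fun w _ =>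
      continuous_const.mul (phiKR_continuous (k w) (r w)))
  -- iterates in [0,1]
  have hiter : ∀ t, f^[t] 0 ∈ Set.Icc (0:ℝ) 1 := by
    intro t
    induction t with
    | zero => exact ⟨le_refl 0, zero_le_one⟩
    | succ t ih => rw [Function.iterate_succ_apply']; exact hmaps _ ih
  -- min gap δ on [0,c]
  obtain ⟨z₀, hz₀mem, hz₀min⟩ : ∃ z₀ ∈ Set.Icc (0:ℝ) c, IsMinOn (fun z => f z - z) (Set.Icc 0 c) z₀ :=
    (isCompact_Icc).exists_isMinOn (Set.nonempty_Icc.mpr hc0)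
      ((hcont.sub continuous_id).continuousOn)
  set δ := f z₀ - z₀ with hδ
  have hδpos : 0 < δ := sub_pos.mpr (hφ z₀ hz₀mem)
  have hgap : ∀ z ∈ Set.Icc (0:ℝ) c, z + δ ≤ f z := by
    intro z hz
    have := hz₀min hz
    simp only [Set.mem_setOf_eq] at this
    linarith [this]
  -- find escape time
  have hesc : ∃ t, c < f^[t] 0 := by
    by_contra hcon
    push_neg at hcon
    have hmemc : ∀ t, f^[t] 0 ∈ Set.Icc (0:ℝ) c := fun t => ⟨(hiter t).1, hcon t⟩
    have hlow : ∀ t : ℕ, (t : ℝ) * δ ≤ f^[t] 0 := by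
      intro t
      induction t with
      | zero => simp
      | succ t ih =>
        rw [Function.iterate_succ_apply']
        have := hgap _ (hmemc t)
        push_cast
        linarith
    obtain ⟨N, hN⟩ := exists_nat_gt (c / δ)
    have : c < (N : ℝ) * δ := by
      rw [div_lt_iff₀ hδpos] at hN
      linarith
    linarith [hlow N, hcon N]
  obtain ⟨τ, hτ⟩ := hesc
  -- c < z t for all t ≥ τ
  have hstay : ∀ t, τ ≤ t → c < f^[t] 0 := by
    intro t ht
    induction t, ht using Nat.le_induction with
    | base => exact hτ
    | succ t ht ih =>
      rw [Function.iterate_succ_apply']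
      have hcmem : c ∈ Set.Icc (0:ℝ) 1 := ⟨hc0, hc1.le⟩
      calc c < f c := hφ c ⟨hc0, le_refl c⟩
        _ ≤ f (f^[t] 0) := hmono hcmem (hiter t) ih.le
  refine ⟨τ, hstay, ?_⟩
  intro ε hε0 hε1 hce t ht
  set S := {z : ℝ | z ∈ Set.Icc (0:ℝ) 1 ∧ 1 - ε ≤ psiP k r p z} with hS
  have hone : (1:ℝ) ∈ S := by
    constructor
    · exact ⟨zero_le_one, le_refl 1⟩
    · have heq : psiP k r p 1 = ∑ w, p w := by
        unfold psiP
        apply Finset.sum_congr rfl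
        intro w _
        rw [phiKR_one (k w) (r w) (hrk w), mul_one]
      rw [heq, hpsum]; linarith
  have hlt : sInf S < f^[t] 0 := by rw [← hce]; exact hstay t ht
  obtain ⟨s, hsS, hslt⟩ := exists_lt_of_csInf_lt ⟨1, hone⟩ hlt
  calc 1 - ε ≤ psiP k r p s := hsS.2
    _ ≤ psiP k r p (f^[t] 0) :=
      psiP_monotoneOn k r hrk p hp0 hsS.1 (hiter t) hslt.le

/-- (Deterministic core of Proposition 1) If `φ_p(z) > z` on `[0,c]` with
`c ∈ [0,1)`, then the recursion `z(0) = 0`, `z(t+1) = φ_p(z(t))` exceeds `c`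
after finitely many steps; moreover, if `c` is the infimum of
`{ z ∈ [0,1] : ψ_p(z) ≥ 1−ε }`, then `ψ_p(z(t)) ≥ 1−ε` from that time on. -/
theorem recursion_exceeds_threshold_in_finite_time
    {Ω : Type*} [Fintype Ω] [Nonempty Ω] (d k r : Ω → ℕ)
    (hd : ∀ w, 1 ≤ d w) (hrk : ∀ w, r w ≤ k w)
    (p : Ω → ℝ) (hp0 : ∀ w, 0 ≤ p w) (hp1 : ∀ w, p w ≤ 1) (hpsum : ∑ w, p w = 1)
    (c : ℝ) (hc0 : 0 ≤ c) (hc1 : c < 1)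
    (hφ : ∀ z ∈ Set.Icc (0 : ℝ) c, z < phiP d k r p z) :
    ∃ τ : ℕ,
      (∀ t : ℕ, τ ≤ t → c < (phiP d k r p)^[t] 0) ∧
      (∀ ε : ℝ, 0 < ε → ε ≤ 1 →
        c = sInf {z : ℝ | z ∈ Set.Icc (0 : ℝ) 1 ∧ 1 - ε ≤ psiP k r p z} →
        ∀ t : ℕ, τ ≤ t → 1 - ε ≤ psiP k r p ((phiP d k r p)^[t] 0)) := by
  exact recursion_exceeds_threshold_in_finite_time' d k r hd hrk p hp0 hp1 hpsum c hc0 hc1 hφ
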